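/- Let N = p·q where p = 2p′+1 and q = 2q′+1 are distinct safe primes (p, q, p′, q′ all odd primes), and let QR(N) denote the subgroup of squares of the unit group (ℤ/Nℤ)ˣ. If u is a unit of ℤ/Nℤ that is a square (i.e., u ∈ QR(N)), then u is a generator of QR(N) — that is, the cyclic subgroup generated by u equals QR(N) — if and only if u − 1 is invertible in ℤ/Nℤ (equivalently, gcd(u − 1, N) = 1). -/

import Mathlib

-- every square in (ZMod p)ˣ, p = 2p'+1, has p'-th power 1
lemma aux_sq_pow_eq_one {p p' : ℕ} [Fact p.Prime] (hpe : p = 2 * p' + 1)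
    {x : (ZMod p)ˣ} (hx : IsSquare x) : x ^ p' = 1 := by
  obtain ⟨y, rfl⟩ := hx
  have hcard : Fintype.card (ZMod p)ˣ = 2 * p' := by
    rw [ZMod.card_units_eq_totient, Nat.totient_prime (Fact.out (p := p.Prime))]
    omega
  have : y ^ (2 * p') = 1 := by rw [← hcard]; exact pow_card_eq_one
  calc (y * y) ^ p' = y ^ (2 * p') := by rw [← sq, ← pow_mul]
    _ = 1 := this

lemma aux_zpowers_eq_rootsOfUnity {p n : ℕ} [Fact p.Prime] [NeZero n]
    {a : (ZMod p)ˣ} (ha : orderOf a = n) :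
    Subgroup.zpowers a = rootsOfUnity n (ZMod p) := by
  apply Subgroup.eq_of_le_of_card_ge
  · rw [Subgroup.zpowers_le, mem_rootsOfUnity, ← ha, pow_orderOf_eq_one]
  · rw [Nat.card_zpowers, ha]
    exact card_rootsOfUnity (ZMod p) n

/-- Micciancio's lemma: for `N = p * q` a product of two distinct safe primes,
a quadratic residue `u` generates the group `QR(N)` of squares of `(ZMod N)ˣ`
iff `u - 1` is invertible mod `N`. -/
theorem squares_zpowers_eq_range_iff_isUnit_sub_one
    (p q p' q' : ℕ) (hp : p.Prime) (hq : q.Prime)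
    (hp' : p'.Prime) (hq' : q'.Prime) (hop' : Odd p') (hoq' : Odd q')
    (hpe : p = 2 * p' + 1) (hqe : q = 2 * q' + 1) (hpq : p ≠ q)
    (N : ℕ) (hN : N = p * q)
    (u : (ZMod N)ˣ) (hu : IsSquare u) :
    Subgroup.zpowers u = (powMonoidHom 2 : (ZMod N)ˣ →* (ZMod N)ˣ).range ↔
      IsUnit ((u : ZMod N) - 1) := by
  subst hN
  haveI := Fact.mk hp
  haveI := Fact.mk hq
  have hp'3 : 3 ≤ p' := by
    rcases hop' with ⟨m, hm⟩
    have := hp'.two_le; omega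
  have hq'3 : 3 ≤ q' := by
    rcases hoq' with ⟨m, hm⟩
    have := hq'.two_le; omega
  have hcop : Nat.Coprime p q := (Nat.coprime_primes hp hq).mpr hpq
  have hp'q' : p' ≠ q' := fun h => hpq (by omega)
  have hcop' : Nat.Coprime p' q' := (Nat.coprime_primes hp' hq').mpr hp'q'
  set e := ZMod.chineseRemainder hcop with he
  set E : (ZMod (p * q))ˣ ≃* (ZMod p)ˣ × (ZMod q)ˣ :=
    (Units.mapEquiv e.toMulEquiv).trans MulEquiv.prodUnits with hE
  obtain ⟨v, hv⟩ := hu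
  set a := (E u).1 with haa
  set b := (E u).2 with hbb
  have hasq : IsSquare a := ⟨(E v).1, by rw [haa, hv, map_mul]; rfl⟩
  have hbsq : IsSquare b := ⟨(E v).2, by rw [hbb, hv, map_mul]; rfl⟩
  have ha1 : a ^ p' = 1 := aux_sq_pow_eq_one hpe hasq
  have hb1 : b ^ q' = 1 := aux_sq_pow_eq_one hqe hbsq
  -- coercion compatibility
  have hcomp : ∀ w : (ZMod (p * q))ˣ,
      ((E w).1 : ZMod p) = (e (w : ZMod (p*q))).1 ∧
      ((E w).2 : ZMod q) = (e (w : ZMod (p*q))).2 := fun w => ⟨rfl, rfl⟩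
  -- RHS ↔ a ≠ 1 ∧ b ≠ 1
  have hRHS : IsUnit ((u : ZMod (p * q)) - 1) ↔ a ≠ 1 ∧ b ≠ 1 := by
    have h1 : IsUnit ((u : ZMod (p * q)) - 1) ↔
        IsUnit (e ((u : ZMod (p * q)) - 1)) := by
      constructor
      · exact fun h => h.map e.toRingHom
      · intro h
        have := h.map e.symm.toRingHom
        simpa using this
    have h2 : e ((u : ZMod (p * q)) - 1) = ((a : ZMod p) - 1, (b : ZMod q) - 1) := by
      rw [map_sub, map_one]
      obtain ⟨h1', h2'⟩ := hcomp u
      rw [Prod.ext_iff]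
      constructor
      · simpa using h1'.symm
      · simpa using h2'.symm
    rw [h1, h2]
    have h3 : IsUnit (((a : ZMod p) - 1, (b : ZMod q) - 1) : ZMod p × ZMod q) ↔
        IsUnit ((a : ZMod p) - 1) ∧ IsUnit ((b : ZMod q) - 1) := by
      constructor
      · exact fun h => ⟨h.map (RingHom.fst _ _), h.map (RingHom.snd _ _)⟩
      · rintro ⟨⟨x, hx⟩, ⟨y, hy⟩⟩
        exact ⟨MulEquiv.prodUnits.symm (x, y), Prod.ext hx hy⟩
    rw [h3, isUnit_iff_ne_zero, isUnit_iff_ne_zero, sub_ne_zero, sub_ne_zero,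
      Ne, Ne, Units.val_eq_one, Units.val_eq_one]
  rw [hRHS]
  constructor
  · -- forward
    intro hEq
    constructor
    · intro ha
      obtain ⟨g, hg⟩ := IsCyclic.exists_generator (α := (ZMod p)ˣ)
      have hordg : orderOf g = Nat.card (ZMod p)ˣ :=
        orderOf_eq_card_of_forall_mem_zpowers hg
      have hcard : Nat.card (ZMod p)ˣ = 2 * p' := by
        rw [Nat.card_eq_fintype_card, ZMod.card_units_eq_totient, Nat.totient_prime hp]; omega
      have hw : E.symm (g ^ 2, 1) ∈ (powMonoidHom 2 : (ZMod (p*q))ˣ →* _).range :=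
        ⟨E.symm (g, 1), by
          rw [powMonoidHom_apply, ← map_pow]
          congr 1
          exact Prod.ext rfl (one_pow 2)⟩
      rw [← hEq] at hw
      obtain ⟨k, hk⟩ := Subgroup.mem_zpowers_iff.mp hw
      have := congrArg E hk
      rw [map_zpow, MulEquiv.apply_symm_apply] at this
      have hfst : a ^ k = g ^ 2 := congrArg Prod.fst this
      rw [ha, one_zpow] at hfst
      have : orderOf g ∣ 2 := orderOf_dvd_of_pow_eq_one hfst.symm
      have := Nat.le_of_dvd (by norm_num) this
      omega
    · intro hb
      obtain ⟨g, hg⟩ := IsCyclic.exists_generator (α := (ZMod q)ˣ)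
      have hordg : orderOf g = Nat.card (ZMod q)ˣ :=
        orderOf_eq_card_of_forall_mem_zpowers hg
      have hcard : Nat.card (ZMod q)ˣ = 2 * q' := by
        rw [Nat.card_eq_fintype_card, ZMod.card_units_eq_totient, Nat.totient_prime hq]; omega
      have hw : E.symm (1, g ^ 2) ∈ (powMonoidHom 2 : (ZMod (p*q))ˣ →* _).range :=
        ⟨E.symm (1, g), by
          rw [powMonoidHom_apply, ← map_pow]
          congr 1
          exact Prod.ext (one_pow 2) rfl⟩
      rw [← hEq] at hw
      obtain ⟨k, hk⟩ := Subgroup.mem_zpowers_iff.mp hw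
      have := congrArg E hk
      rw [map_zpow, MulEquiv.apply_symm_apply] at this
      have hsnd : b ^ k = g ^ 2 := congrArg Prod.snd this
      rw [hb, one_zpow] at hsnd
      have : orderOf g ∣ 2 := orderOf_dvd_of_pow_eq_one hsnd.symm
      have := Nat.le_of_dvd (by norm_num) this
      omega
  · -- backward
    rintro ⟨ha, hb⟩
    have horda : orderOf a = p' := by
      have hdvd : orderOf a ∣ p' := orderOf_dvd_of_pow_eq_one ha1
      rcases (Nat.dvd_prime hp').mp hdvd with h | h
      · exact absurd (orderOf_eq_one_iff.mp h) ha
      · exact h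
    have hordb : orderOf b = q' := by
      have hdvd : orderOf b ∣ q' := orderOf_dvd_of_pow_eq_one hb1
      rcases (Nat.dvd_prime hq').mp hdvd with h | h
      · exact absurd (orderOf_eq_one_iff.mp h) hb
      · exact h
    apply le_antisymm
    · rw [Subgroup.zpowers_le]
      exact ⟨v, by rw [powMonoidHom_apply, sq, hv]⟩
    · rintro w ⟨z, hz⟩
      rw [powMonoidHom_apply] at hz
      have hxsq : IsSquare (E w).1 := ⟨(E z).1, by rw [← hz, map_pow, sq]; rfl⟩
      have hysq : IsSquare (E w).2 := ⟨(E z).2, by rw [← hz, map_pow, sq]; rfl⟩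
      have hx1 : (E w).1 ^ p' = 1 := aux_sq_pow_eq_one hpe hxsq
      have hy1 : (E w).2 ^ q' = 1 := aux_sq_pow_eq_one hqe hysq
      haveI : NeZero p' := ⟨hp'.ne_zero⟩
      haveI : NeZero q' := ⟨hq'.ne_zero⟩
      have hxmem : (E w).1 ∈ Subgroup.zpowers a := by
        rw [aux_zpowers_eq_rootsOfUnity horda, mem_rootsOfUnity]; exact hx1
      have hymem : (E w).2 ∈ Subgroup.zpowers b := by
        rw [aux_zpowers_eq_rootsOfUnity hordb, mem_rootsOfUnity]; exact hy1
      obtain ⟨i, hi⟩ := Subgroup.mem_zpowers_iff.mp hxmem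
      obtain ⟨j, hj⟩ := Subgroup.mem_zpowers_iff.mp hymem
      have hic : IsCoprime (p' : ℤ) (q' : ℤ) := by
        rw [Int.isCoprime_iff_gcd_eq_one]
        exact_mod_cast hcop'
      obtain ⟨s, t, hst⟩ := hic
      set k : ℤ := j * (s * p') + i * (t * q') with hkdef
      have hak : a ^ k = (E w).1 := by
        rw [← hi]
        have : a ^ (k - i) = 1 := by
          rw [← orderOf_dvd_iff_zpow_eq_one, horda]
          refine Dvd.intro (s * (j - i)) ?_
          have : t * q' = 1 - s * p' := by linarith
          rw [hkdef, this]; ring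
        calc a ^ k = a ^ (i + (k - i)) := by ring_nf
          _ = a ^ i * a ^ (k - i) := zpow_add a i (k - i)
          _ = a ^ i := by rw [this, mul_one]
      have hbk : b ^ k = (E w).2 := by
        rw [← hj]
        have : b ^ (k - j) = 1 := by
          rw [← orderOf_dvd_iff_zpow_eq_one, hordb]
          refine Dvd.intro (t * (i - j)) ?_
          have : s * p' = 1 - t * q' := by linarith
          rw [hkdef, this]; ring
        calc b ^ k = b ^ (j + (k - j)) := by ring_nf
          _ = b ^ j * b ^ (k - j) := zpow_add b j (k - j)
          _ = b ^ j := by rw [this, mul_one]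
      refine Subgroup.mem_zpowers_iff.mpr ⟨k, ?_⟩
      apply E.injective
      rw [map_zpow]
      exact Prod.ext hak hbk
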